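/- If in the Frank–Wolfe algorithm the initialization x(t_0) = 0 is replaced by an arbitrary starting point x₀ ∈ argmin_{x ∈ P} ‖x‖_∞ (dropping the assumptions 0 ∈ P and F(0) = 0), then every coordinate i ∈ {1,…,n} and every j ∈ {0,1,…,T} satisfy 1 − x_i(t_j) ≥ e^{−t_j/(1+t_j)}·(1 − x_i(t_0)), and consequently F(x(t_j) ∨ x*) ≥ e^{−t_j/(1+t_j)}·(1 − ‖x₀‖_∞)·F(x*). -/

import Mathlib

/-- The harmonic number `H j = ∑_{k=1}^j 1/k` (with `H 0 = 0`). -/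
noncomputable def harmonicNum (j : ℕ) : ℝ := ∑ k ∈ Finset.range j, (1 : ℝ) / (k + 1)

/-- `H_{2,j} = ∑_{k=1}^j 1/k²`. -/
noncomputable def harmonicNum2 (j : ℕ) : ℝ := ∑ k ∈ Finset.range j, (1 : ℝ) / ((k : ℝ) + 1) ^ 2

/-- The time values `t_j = 1/(1 - ln(1 + H_j/H_T)) - 1` of the Frank–Wolfe algorithm. -/
noncomputable def fwTime (T j : ℕ) : ℝ :=
  1 / (1 - Real.log (1 + harmonicNum j / harmonicNum T)) - 1

/-- The Frank–Wolfe step ratio `e^{-1/(1+t_j) + 1/(1+t_{j+1})}`. -/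
noncomputable def fwRatio (T j : ℕ) : ℝ :=
  Real.exp (-(1 / (1 + fwTime T j)) + 1 / (1 + fwTime T (j + 1)))

/-- `√a_{t_j} = e^{t_j/(1+t_j)}`. -/
noncomputable def fwSqa (T j : ℕ) : ℝ := Real.exp (fwTime T j / (1 + fwTime T j))

/-- `F : [0,1]^n → ℝ` is DR-submodular: for all `x ≤ y` in `[0,1]^n`, coordinates `i` and
`a > 0` with `x + a·e_i, y + a·e_i ∈ [0,1]^n`, one has
`F(x + a·e_i) - F(x) ≥ F(y + a·e_i) - F(y)`. -/
def DRSubmodular {n : ℕ} (F : (Fin n → ℝ) → ℝ) : Prop :=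
  ∀ x y : Fin n → ℝ, x ∈ Set.Icc (0 : Fin n → ℝ) 1 → y ∈ Set.Icc (0 : Fin n → ℝ) 1 →
    x ≤ y → ∀ i : Fin n, ∀ a : ℝ, 0 < a →
      x + a • (Pi.single i 1 : Fin n → ℝ) ∈ Set.Icc (0 : Fin n → ℝ) 1 →
      y + a • (Pi.single i 1 : Fin n → ℝ) ∈ Set.Icc (0 : Fin n → ℝ) 1 →
      F (y + a • (Pi.single i 1 : Fin n → ℝ)) - F y ≤
        F (x + a • (Pi.single i 1 : Fin n → ℝ)) - F x

/-- The continuous linear map `y ↦ ⟨g, y⟩ = ∑ i, g i * y i` on `ℝⁿ`. -/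
noncomputable def gradCLM {n : ℕ} (g : Fin n → ℝ) : (Fin n → ℝ) →L[ℝ] ℝ :=
  ∑ i, g i • (ContinuousLinearMap.proj i : (Fin n → ℝ) →L[ℝ] ℝ)

/-- `gradF` is the gradient of `F` on the box `[0,1]^n`: at each point of the box, `F` is
differentiable within the box with derivative `y ↦ ⟨gradF z, y⟩`. -/
def HasGradientOnBox {n : ℕ} (F : (Fin n → ℝ) → ℝ) (gradF : (Fin n → ℝ) → Fin n → ℝ) : Prop :=
  ∀ z ∈ Set.Icc (0 : Fin n → ℝ) 1, HasFDerivWithinAt F (gradCLM (gradF z)) (Set.Icc 0 1) z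


open Real in
lemma harmonicNum_nonneg (j : ℕ) : 0 ≤ harmonicNum j := by
  apply Finset.sum_nonneg; intro k _; positivity

lemma harmonicNum_mono {j k : ℕ} (h : j ≤ k) : harmonicNum j ≤ harmonicNum k := by
  apply Finset.sum_le_sum_of_subset_of_nonneg (Finset.range_subset_range.mpr h)
  intro i _ _; positivity

lemma harmonicNum_pos {T : ℕ} (hT : 1 ≤ T) : 0 < harmonicNum T := by
  have : (0:ℝ) < harmonicNum 1 := by simp [harmonicNum]
  exact lt_of_lt_of_le this (harmonicNum_mono hT)

lemma fwD_pos {T j : ℕ} (hT : 1 ≤ T) (hj : j ≤ T) :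
    0 < 1 - Real.log (1 + harmonicNum j / harmonicNum T) := by
  have hHT := harmonicNum_pos hT
  have h1 : harmonicNum j / harmonicNum T ≤ 1 :=
    (div_le_one hHT).mpr (harmonicNum_mono hj)
  have h0 : 0 ≤ harmonicNum j / harmonicNum T := div_nonneg (harmonicNum_nonneg j) hHT.le
  have he : (2:ℝ) < Real.exp 1 := by nlinarith [Real.add_one_lt_exp (one_ne_zero)]
  have : Real.log (1 + harmonicNum j / harmonicNum T) < 1 := by
    have := Real.log_lt_log (by linarith) (show (1:ℝ) + harmonicNum j / harmonicNum T < Real.exp 1 by linarith)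
    rwa [Real.log_exp] at this
  linarith

lemma fwD_le_one {T j : ℕ} (hT : 1 ≤ T) (hj : j ≤ T) :
    1 - Real.log (1 + harmonicNum j / harmonicNum T) ≤ 1 := by
  have hHT := harmonicNum_pos hT
  have h0 : 0 ≤ harmonicNum j / harmonicNum T := div_nonneg (harmonicNum_nonneg j) hHT.le
  have := Real.log_nonneg (by linarith : (1:ℝ) ≤ 1 + harmonicNum j / harmonicNum T)
  linarith

lemma fwTime_nonneg {T j : ℕ} (hT : 1 ≤ T) (hj : j ≤ T) : 0 ≤ fwTime T j := by
  have h1 := fwD_pos hT hj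
  have h2 := fwD_le_one hT hj
  have : (1:ℝ) ≤ 1 / (1 - Real.log (1 + harmonicNum j / harmonicNum T)) :=
    (le_div_iff₀ h1).mpr (by linarith)
  simp only [fwTime]; linarith

lemma fwTime_mono {T j : ℕ} (hT : 1 ≤ T) (hj : j + 1 ≤ T) : fwTime T j ≤ fwTime T (j+1) := by
  have h1 := fwD_pos hT hj
  have h2 := fwD_pos hT (Nat.le_of_succ_le hj)
  have hHT := harmonicNum_pos hT
  have hmono : harmonicNum j ≤ harmonicNum (j+1) := harmonicNum_mono (Nat.le_succ j)
  have h0 : 0 ≤ harmonicNum j / harmonicNum T :=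
    div_nonneg (harmonicNum_nonneg j) hHT.le
  have hlog : Real.log (1 + harmonicNum j / harmonicNum T) ≤
      Real.log (1 + harmonicNum (j+1) / harmonicNum T) := by
    apply Real.log_le_log (by linarith)
    gcongr
  have : 1 / (1 - Real.log (1 + harmonicNum j / harmonicNum T)) ≤
      1 / (1 - Real.log (1 + harmonicNum (j+1) / harmonicNum T)) := by
    apply one_div_le_one_div_of_le h1; linarith
  simp only [fwTime]; linarith

lemma fwTime_zero {T : ℕ} (hT : 1 ≤ T) : fwTime T 0 = 0 := by
  simp [fwTime, harmonicNum]

lemma fwRatio_identity {T j : ℕ} (hT : 1 ≤ T) (hj : j + 1 ≤ T) :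
    fwRatio T j * Real.exp (-(fwTime T j)/(1 + fwTime T j)) =
      Real.exp (-(fwTime T (j+1))/(1 + fwTime T (j+1))) := by
  have ha : (0:ℝ) < 1 + fwTime T j := by
    linarith [fwTime_nonneg hT (Nat.le_of_succ_le hj)]
  have hb : (0:ℝ) < 1 + fwTime T (j+1) := by linarith [fwTime_nonneg hT hj]
  rw [fwRatio, ← Real.exp_add]
  congr 1
  field_simp
  ring

lemma fwRatio_le_one {T j : ℕ} (hT : 1 ≤ T) (hj : j + 1 ≤ T) : fwRatio T j ≤ 1 := by
  have ha : (0:ℝ) < 1 + fwTime T j := by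
    linarith [fwTime_nonneg hT (Nat.le_of_succ_le hj)]
  have hb : (0:ℝ) < 1 + fwTime T (j+1) := by linarith [fwTime_nonneg hT hj]
  have := fwTime_mono hT hj
  rw [fwRatio, Real.exp_le_one_iff]
  have : 1 / (1 + fwTime T (j+1)) ≤ 1 / (1 + fwTime T j) :=
    one_div_le_one_div_of_le ha (by linarith)
  linarith

lemma dr_dir {n : ℕ} {F : (Fin n → ℝ) → ℝ} (hDR : DRSubmodular F)
    (p q d : Fin n → ℝ) (hd : 0 ≤ d) (hpq : p ≤ q)
    (hp : 0 ≤ p) (hqd : q + d ≤ (1 : Fin n → ℝ)) :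
    F (q + d) - F q ≤ F (p + d) - F p := by
  set e : ℕ → (Fin n → ℝ) := fun k i => if (i : ℕ) < k then d i else 0 with he
  have hek0 : ∀ k, (0 : Fin n → ℝ) ≤ e k := by
    intro k i; simp only [he]; split
    · exact hd i
    · simp
  have hekd : ∀ k, e k ≤ d := by
    intro k i; simp only [he]; split
    · exact le_refl _
    · exact hd i
  have hq0 : (0 : Fin n → ℝ) ≤ q := le_trans hp hpq
  have hpd : p + d ≤ (1 : Fin n → ℝ) := le_trans (add_le_add_left hpq d) hqd
  have hmem : ∀ z : Fin n → ℝ, (0:Fin n → ℝ) ≤ z → z + d ≤ 1 → ∀ w : Fin n → ℝ,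
      (0:Fin n→ℝ) ≤ w → w ≤ d → z + w ∈ Set.Icc (0 : Fin n → ℝ) 1 := by
    intro z hz hzd w hw hwd
    exact Set.mem_Icc.mpr ⟨add_nonneg hz hw, le_trans (add_le_add_right hwd z) hzd⟩
  have main : ∀ k, F (q + e k) - F q ≤ F (p + e k) - F p := by
    intro k; induction k with
    | zero =>
      have h0 : e 0 = 0 := funext fun i => if_neg (Nat.not_lt_zero _)
      rw [h0, add_zero, add_zero]; simp
    | succ k ih =>
      by_cases hkn : k < n
      · set i0 : Fin n := ⟨k, hkn⟩ with hi0
        rcases eq_or_lt_of_le (hd i0) with hdk | hdk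
        · have hsame : e (k+1) = e k := by
            funext i; simp only [he]
            rcases lt_trichotomy (i : ℕ) k with h | h | h
            · rw [if_pos (by omega), if_pos h]
            · have : i = i0 := Fin.ext h
              rw [if_pos (by omega), if_neg (by omega), this, ← hdk]; simp
            · rw [if_neg (by omega), if_neg (by omega)]
          rw [hsame]; exact ih
        · have hsucc : ∀ z : Fin n → ℝ, z + e (k+1) = (z + e k) + d i0 • (Pi.single i0 1 : Fin n → ℝ) := by
            intro z; funext i
            simp only [Pi.add_apply, Pi.smul_apply, smul_eq_mul, he, Pi.single_apply]
            have hv : (i0 : ℕ) = k := rfl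
            rcases eq_or_ne i i0 with hii | hii
            · subst hii
              rw [if_pos (by omega), if_neg (by omega), if_pos rfl]; ring
            · have hik : (i : ℕ) ≠ k := by
                intro hh; exact hii (Fin.ext (by omega))
              by_cases hlt : (i : ℕ) < k
              · rw [if_pos (by omega), if_pos hlt, if_neg hii]; ring
              · rw [if_neg (by omega), if_neg hlt, if_neg hii]; ring
          have mp : p + e k ∈ Set.Icc (0:Fin n → ℝ) 1 := hmem p hp hpd _ (hek0 k) (hekd k)
          have mq : q + e k ∈ Set.Icc (0:Fin n → ℝ) 1 := hmem q hq0 hqd _ (hek0 k) (hekd k)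
          have mp' : (p + e k) + d i0 • (Pi.single i0 1 : Fin n → ℝ) ∈ Set.Icc (0:Fin n → ℝ) 1 := by
            rw [← hsucc p]; exact hmem p hp hpd _ (hek0 (k+1)) (hekd (k+1))
          have mq' : (q + e k) + d i0 • (Pi.single i0 1 : Fin n → ℝ) ∈ Set.Icc (0:Fin n → ℝ) 1 := by
            rw [← hsucc q]; exact hmem q hq0 hqd _ (hek0 (k+1)) (hekd (k+1))
          have hle : p + e k ≤ q + e k := add_le_add_left hpq (e k)
          have hDRk := hDR (p + e k) (q + e k) mp mq hle i0 (d i0) hdk mp' mq'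
          rw [← hsucc p, ← hsucc q] at hDRk
          linarith
      · have hsame : e (k+1) = e k := by
          funext i
          have : (i : ℕ) < k := lt_of_lt_of_le i.isLt (le_of_not_gt hkn)
          simp only [he]; rw [if_pos (by omega), if_pos this]
        rw [hsame]; exact ih
  have hen : e n = d := funext fun i => if_pos i.isLt
  have := main n
  rwa [hen] at this

open Filter in
lemma sup_bound {n : ℕ} {F : (Fin n → ℝ) → ℝ}
    (hF : ∀ z ∈ Set.Icc (0 : Fin n → ℝ) 1, 0 ≤ F z) (hDR : DRSubmodular F)
    {x y : Fin n → ℝ} (hx : x ∈ Set.Icc (0 : Fin n → ℝ) 1)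
    (hy : y ∈ Set.Icc (0 : Fin n → ℝ) 1) :
    (1 - ‖x‖) * F y ≤ F (x ⊔ y) := by
  have hθ0 : 0 ≤ ‖x‖ := norm_nonneg x
  have hsup_mem : x ⊔ y ∈ Set.Icc (0 : Fin n → ℝ) 1 :=
    Set.mem_Icc.mpr ⟨le_trans hx.1 le_sup_left, sup_le hx.2 hy.2⟩
  have hFy : 0 ≤ F y := hF y hy
  have hFxy : 0 ≤ F (x ⊔ y) := hF _ hsup_mem
  rcases lt_or_ge ‖x‖ 1 with hθ1 | hθ1
  swap
  · nlinarith
  rcases eq_or_lt_of_le hθ0 with hθp | hθp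
  · have hx0 : x = 0 := norm_eq_zero.mp hθp.symm
    have : x ⊔ y = y := by rw [hx0]; exact sup_eq_right.mpr hy.1
    rw [this]; nlinarith
  -- main case 0 < θ < 1
  set θ := ‖x‖ with hθ
  set M : ℝ := 1 / θ with hM
  have hM1 : 1 < M := (one_lt_div hθp).mpr hθ1
  set d : Fin n → ℝ := x ⊔ y - y with hd
  have hd0 : (0 : Fin n → ℝ) ≤ d := by
    rw [hd]; intro i; simp only [Pi.sub_apply, Pi.zero_apply, Pi.sup_apply, sub_nonneg]
    exact le_sup_right
  have hxle : ∀ i, x i ≤ θ := fun i =>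
    le_trans (le_abs_self _) (by rw [← Real.norm_eq_abs]; exact norm_le_pi_norm x i)
  have hdθ : ∀ i, d i ≤ θ * (1 - y i) := by
    intro i
    have h1 : 0 ≤ x i := hx.1 i
    have h2 : x i ≤ 1 := hx.2 i
    have h3 : 0 ≤ y i := hy.1 i
    have h4 : y i ≤ 1 := hy.2 i
    have h5 := hxle i
    rw [hd]; simp only [Pi.sub_apply, Pi.sup_apply]
    rcases le_total (x i) (y i) with h | h
    · rw [sup_eq_right.mpr h]; nlinarith
    · rw [sup_eq_left.mpr h]; nlinarith
  have hmem : ∀ s : ℝ, 0 ≤ s → s ≤ M → y + s • d ∈ Set.Icc (0 : Fin n → ℝ) 1 := by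
    intro s hs hsM
    constructor
    · intro i; simp only [Pi.add_apply, Pi.smul_apply, smul_eq_mul, Pi.zero_apply]
      have h1 : (0:ℝ) ≤ d i := hd0 i
      have h2 : (0:ℝ) ≤ y i := hy.1 i
      positivity
    · intro i; simp only [Pi.add_apply, Pi.smul_apply, smul_eq_mul, Pi.one_apply]
      have h1 : s * d i ≤ s * (θ * (1 - y i)) := mul_le_mul_of_nonneg_left (hdθ i) hs
      have h2 : s * θ ≤ 1 := (le_div_iff₀ hθp).mp (hM ▸ hsM)
      have h4 : y i ≤ (1:ℝ) := hy.2 i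
      have h3 : (0:ℝ) ≤ 1 - y i := by linarith
      nlinarith [mul_le_mul_of_nonneg_right h2 h3]
  set g : ℝ → ℝ := fun s => F (y + s • d) with hg
  have hdec : ∀ u v s : ℝ, 0 ≤ u → u ≤ v → 0 < s → v + s ≤ M →
      g (v + s) - g v ≤ g (u + s) - g u := by
    intro u v s hu huv hs hvs
    have huM : u ≤ M := by linarith
    have hvM : v ≤ M := by linarith
    have hkey := dr_dir hDR (y + u • d) (y + v • d) (s • d)
      (smul_nonneg hs.le hd0)
      (by intro i; simp only [Pi.add_apply, Pi.smul_apply, smul_eq_mul]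
          have h0 : (0:ℝ) ≤ d i := hd0 i
          nlinarith [mul_le_mul_of_nonneg_right huv h0])
      ((hmem u hu huM).1)
      (by
        have heq : (y + v • d) + s • d = y + (v + s) • d := by
          rw [add_smul, add_assoc]
        rw [heq]; exact (hmem (v + s) (by linarith) hvs).2)
    have heqv : (y + v • d) + s • d = y + (v + s) • d := by rw [add_smul, add_assoc]
    have hequ : (y + u • d) + s • d = y + (u + s) • d := by rw [add_smul, add_assoc]
    rw [heqv, hequ] at hkey
    exact hkey
  -- discrete inequality
  have claim : ∀ N K : ℕ, 1 ≤ N → N ≤ K → (K : ℝ) ≤ M * N →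
      (1 - (N : ℝ) / K) * F y ≤ F (x ⊔ y) := by
    intro N K hN hNK hKM
    have hN0 : (0 : ℝ) < N := by exact_mod_cast hN
    have hK0 : (0 : ℝ) < K := by
      have : (1:ℕ) ≤ K := le_trans hN hNK
      exact_mod_cast this
    set f : ℕ → ℝ := fun k => g ((k : ℝ) / N) with hf
    set Δ : ℕ → ℝ := fun k => f (k + 1) - f k with hΔ
    have hΔmono : ∀ k l : ℕ, k ≤ l → l + 1 ≤ K → Δ l ≤ Δ k := by
      intro k l hkl hlK
      have h1 : ((l : ℝ) + 1) / N ≤ M := by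
        rw [div_le_iff₀ hN0]
        have : ((l : ℝ) + 1) ≤ K := by exact_mod_cast hlK
        linarith
      have hcast : (k : ℝ) ≤ (l : ℝ) := by exact_mod_cast hkl
      have := hdec ((k : ℝ) / N) ((l : ℝ) / N) (1 / N)
        (by positivity)
        (by gcongr)
        (by positivity)
        (by rw [← add_div]; exact h1)
      have e1 : (l : ℝ) / N + 1 / N = ((l : ℝ) + 1) / N := by ring
      have e2 : (k : ℝ) / N + 1 / N = ((k : ℝ) + 1) / N := by ring
      rw [e1, e2] at this
      simp only [hΔ, hf]
      push_cast
      exact this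
    have tele : ∀ m : ℕ, ∑ k ∈ Finset.range m, Δ k = f m - f 0 :=
      fun m => Finset.sum_range_sub f m
    have hf0 : f 0 = F y := by simp [hf, hg]
    have hfN : f N = F (x ⊔ y) := by
      have : ((N : ℝ)) / N = 1 := div_self (ne_of_gt hN0)
      simp only [hf, this, hg, one_smul, hd]
      congr 1; abel
    have hfK : 0 ≤ f K := by
      apply hF
      apply hmem
      · positivity
      · rw [div_le_iff₀ hN0]; linarith
    have hΔlast : (N : ℝ) * Δ (N - 1) ≤ F (x ⊔ y) - F y := by
      have hsum : ∀ k ∈ Finset.range N, Δ (N - 1) ≤ Δ k := by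
        intro k hk
        rw [Finset.mem_range] at hk
        exact hΔmono k (N - 1) (by omega) (by omega)
      have := Finset.card_nsmul_le_sum (Finset.range N) Δ (Δ (N - 1)) hsum
      rw [Finset.card_range, tele, hf0, hfN] at this
      rw [nsmul_eq_mul] at this
      linarith
    have hIco : ∑ k ∈ Finset.Ico N K, Δ k ≤ ((K : ℝ) - N) * Δ (N - 1) := by
      have hsum : ∀ k ∈ Finset.Ico N K, Δ k ≤ Δ (N - 1) := by
        intro k hk
        rw [Finset.mem_Ico] at hk
        exact hΔmono (N - 1) k (by omega) (by omega)
      have h1 := Finset.sum_le_card_nsmul (Finset.Ico N K) Δ (Δ (N - 1)) hsum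
      rw [Nat.card_Ico, nsmul_eq_mul, Nat.cast_sub hNK] at h1
      exact h1
    have hsplit : ∑ k ∈ Finset.range N, Δ k + ∑ k ∈ Finset.Ico N K, Δ k
        = ∑ k ∈ Finset.range K, Δ k := by
      rw [Finset.range_eq_Ico, Finset.range_eq_Ico]
      exact Finset.sum_Ico_consecutive Δ (Nat.zero_le N) hNK
    have hteleK := tele K
    have hteleN := tele N
    rw [hf0] at hteleK hteleN
    rw [hfN] at hteleN
    -- f K = F y + (F (x ⊔ y) - F y) + ∑ Ico
    have hKN : (0:ℝ) ≤ (K:ℝ) - (N:ℝ) := by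
      have : (N:ℝ) ≤ K := by exact_mod_cast hNK
      linarith
    have key1 : 0 ≤ (N:ℝ) * F (x ⊔ y) + ((K:ℝ) - N) * (F (x ⊔ y) - F y) := by
      have hfk : 0 ≤ F (x ⊔ y) + ∑ k ∈ Finset.Ico N K, Δ k := by
        linarith [hfK, hteleK, hteleN, hsplit]
      linarith [mul_le_mul_of_nonneg_left hIco hN0.le,
        mul_le_mul_of_nonneg_left hΔlast hKN,
        mul_nonneg hN0.le hfk]
    have hrw : (1 - (N:ℝ)/K) * F y = ((K:ℝ) * F y - N * F y) / K := by
      field_simp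
    rw [hrw, div_le_iff₀ hK0]
    nlinarith [key1]
  -- limiting argument
  have hMpos : (0:ℝ) < M := by linarith
  have hfloor_le : ∀ N : ℕ, ((⌊M * N⌋₊ : ℝ)) ≤ M * N := fun N =>
    Nat.floor_le (by positivity)
  have hle_floor : ∀ N : ℕ, 1 ≤ N → N ≤ ⌊M * N⌋₊ := by
    intro N hN
    apply Nat.le_floor
    nlinarith [hM1, (by exact_mod_cast hN : (1:ℝ) ≤ N)]
  have hev : ∀ᶠ N : ℕ in atTop, (1 - (N:ℝ) / (⌊M * N⌋₊ : ℝ)) * F y ≤ F (x ⊔ y) := by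
    filter_upwards [eventually_ge_atTop 1] with N hN
    exact claim N ⌊M * N⌋₊ hN (hle_floor N hN) (hfloor_le N)
  have htend1 : Tendsto (fun N : ℕ => ((⌊M * N⌋₊ : ℝ)) / N) atTop (nhds M) := by
    have hlow : Tendsto (fun N : ℕ => M - 1 / (N:ℝ)) atTop (nhds M) := by
      have h0 : Tendsto (fun N : ℕ => 1 / (N:ℝ)) atTop (nhds 0) :=
        tendsto_one_div_atTop_nhds_zero_nat
      simpa using tendsto_const_nhds.sub h0
    apply tendsto_of_tendsto_of_tendsto_of_le_of_le' hlow tendsto_const_nhds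
    · filter_upwards [eventually_ge_atTop 1] with N hN
      have hN0 : (0:ℝ) < N := by exact_mod_cast hN
      have h5 := Nat.sub_one_lt_floor (M * N)
      have h6 : (1/(N:ℝ)) * N = 1 := by field_simp
      rw [le_div_iff₀ hN0]
      nlinarith [h5, h6]
    · filter_upwards [eventually_ge_atTop 1] with N hN
      have hN0 : (0:ℝ) < N := by exact_mod_cast hN
      rw [div_le_iff₀ hN0]
      exact hfloor_le N
  have htend2 : Tendsto (fun N : ℕ => (N : ℝ) / (⌊M * N⌋₊ : ℝ)) atTop (nhds θ) := by
    have := htend1.inv₀ (ne_of_gt hMpos)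
    have hMinv : M⁻¹ = θ := by rw [hM]; simp
    rw [hMinv] at this
    refine this.congr (fun N => ?_)
    rw [inv_div]
  have htend3 : Tendsto (fun N : ℕ => (1 - (N:ℝ) / (⌊M * N⌋₊ : ℝ)) * F y) atTop
      (nhds ((1 - θ) * F y)) :=
    (tendsto_const_nhds.sub htend2).mul tendsto_const_nhds
  exact le_of_tendsto htend3 hev

/-- If the initialization is replaced by an arbitrary
`x₀ ∈ argmin_{x ∈ P} ‖x‖_∞` (dropping `0 ∈ P` and `F(0) = 0`), then
`1 - x_i(t_j) ≥ e^{-t_j/(1+t_j)} (1 - x_i(t_0))` for all `i` and `j ≤ T`, and consequently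
`F(x(t_j) ∨ x*) ≥ e^{-t_j/(1+t_j)} (1 - ‖x₀‖_∞) F(x*)`.  (On `Fin n → ℝ` the default norm
`‖·‖` is the sup norm `max_i |x_i|`.) -/
theorem fw_general_start_bounds
    (n : ℕ) (F : (Fin n → ℝ) → ℝ)
    (hFnonneg : ∀ z ∈ Set.Icc (0 : Fin n → ℝ) 1, 0 ≤ F z)
    (hDR : DRSubmodular F)
    (P : Set (Fin n → ℝ)) (hPsub : P ⊆ Set.Icc 0 1) (hPconv : Convex ℝ P)
    (xstar : Fin n → ℝ) (hxstarP : xstar ∈ P) (hxstarMax : ∀ z ∈ P, F z ≤ F xstar)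
    (T : ℕ) (hT : 1 ≤ T)
    (x0 : Fin n → ℝ) (hx0P : x0 ∈ P) (hx0min : ∀ z ∈ P, ‖x0‖ ≤ ‖z‖)
    (x v : ℕ → Fin n → ℝ)
    (hx0 : x 0 = x0)
    (hvP : ∀ j < T, v j ∈ P)
    (hstep : ∀ j < T, x (j + 1) = fwRatio T j • x j + (1 - fwRatio T j) • v j) :
    (∀ j ≤ T, ∀ i : Fin n,
        1 - x j i ≥ Real.exp (-(fwTime T j) / (1 + fwTime T j)) * (1 - x0 i)) ∧
    (∀ j ≤ T,
        F (x j ⊔ xstar) ≥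
          Real.exp (-(fwTime T j) / (1 + fwTime T j)) * (1 - ‖x0‖) * F xstar) := by
  set E : ℕ → ℝ := fun j => Real.exp (-(fwTime T j) / (1 + fwTime T j)) with hE
  have hEpos : ∀ j, 0 < E j := fun j => Real.exp_pos _
  have hEone : ∀ j, j ≤ T → E j ≤ 1 := by
    intro j hj
    rw [hE]
    apply Real.exp_le_one_iff.mpr
    have h1 := fwTime_nonneg hT hj
    apply div_nonpos_of_nonpos_of_nonneg (by linarith) (by linarith)
  -- coordinatewise step formula
  have hcoord : ∀ j < T, ∀ i : Fin n,
      x (j + 1) i = fwRatio T j * x j i + (1 - fwRatio T j) * v j i := by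
    intro j hj i
    rw [hstep j hj]
    simp [Pi.add_apply, Pi.smul_apply, smul_eq_mul]
  have part1 : ∀ j ≤ T, ∀ i : Fin n, 1 - x j i ≥ E j * (1 - x0 i) := by
    intro j
    induction j with
    | zero =>
      intro _ i
      rw [hx0, hE]
      simp [fwTime_zero hT]
    | succ j ih =>
      intro hjT i
      have hjT' : j < T := hjT
      have IH := ih (Nat.le_of_succ_le hjT) i
      have hr0 : 0 < fwRatio T j := Real.exp_pos _
      have hr1 : fwRatio T j ≤ 1 := fwRatio_le_one hT hjT
      have hv1 : v j i ≤ (1:ℝ) := (hPsub (hvP j hjT')).2 i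
      have hstep1 : 1 - x (j+1) i ≥ fwRatio T j * (1 - x j i) := by
        rw [hcoord j hjT' i]
        nlinarith
      have hstep2 : fwRatio T j * (1 - x j i) ≥ fwRatio T j * (E j * (1 - x0 i)) :=
        mul_le_mul_of_nonneg_left IH hr0.le
      have hid : fwRatio T j * (E j * (1 - x0 i)) = E (j+1) * (1 - x0 i) := by
        rw [hE, ← mul_assoc, fwRatio_identity hT hjT]
      linarith
  have hxbox : ∀ j ≤ T, x j ∈ Set.Icc (0 : Fin n → ℝ) 1 := by
    intro j
    induction j with
    | zero => intro _; rw [hx0]; exact hPsub hx0P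
    | succ j ih =>
      intro hjT
      have hjT' : j < T := hjT
      have hxj := ih (Nat.le_of_succ_le hjT)
      have hvj := hPsub (hvP j hjT')
      have hr0 : 0 < fwRatio T j := Real.exp_pos _
      have hr1 : fwRatio T j ≤ 1 := fwRatio_le_one hT hjT
      constructor
      · intro i
        show (0:ℝ) ≤ x (j+1) i
        rw [hcoord j hjT' i]
        have h1 : (0:ℝ) ≤ x j i := hxj.1 i
        have h2 : (0:ℝ) ≤ v j i := hvj.1 i
        nlinarith
      · intro i
        show x (j+1) i ≤ (1:ℝ)
        rw [hcoord j hjT' i]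
        have h1 : x j i ≤ (1:ℝ) := hxj.2 i
        have h2 : v j i ≤ (1:ℝ) := hvj.2 i
        nlinarith
  refine ⟨part1, ?_⟩
  intro j hj
  have hxj := hxbox j hj
  have hxstarbox := hPsub hxstarP
  have hFxs : 0 ≤ F xstar := hFnonneg _ hxstarbox
  have hx0box := hPsub hx0P
  have hx0n : ‖x0‖ ≤ 1 := by
    apply (pi_norm_le_iff_of_nonneg (by norm_num)).mpr
    intro i
    rw [Real.norm_eq_abs, abs_le]
    have h1 : (0:ℝ) ≤ x0 i := hx0box.1 i
    have h2 : x0 i ≤ (1:ℝ) := hx0box.2 i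
    exact ⟨by linarith, h2⟩
  have hx0nn : 0 ≤ ‖x0‖ := norm_nonneg x0
  have hEj1 := hEone j hj
  have hEj0 := (hEpos j).le
  have hb : ‖x j‖ ≤ 1 - E j * (1 - ‖x0‖) := by
    apply (pi_norm_le_iff_of_nonneg (by nlinarith)).mpr
    intro i
    rw [Real.norm_eq_abs, abs_le]
    constructor
    · have h0 : (0:ℝ) ≤ x j i := hxj.1 i
      nlinarith
    · have h1 := part1 j hj i
      have h2 : x0 i ≤ ‖x0‖ := le_trans (le_abs_self _)
        (by rw [← Real.norm_eq_abs]; exact norm_le_pi_norm x0 i)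
      nlinarith
  have hkey := sup_bound hFnonneg hDR hxj hxstarbox
  have : E j * (1 - ‖x0‖) * F xstar ≤ (1 - ‖x j‖) * F xstar := by
    apply mul_le_mul_of_nonneg_right _ hFxs
    linarith
  linarith
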